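/- Let $r \le N$ and let $Q$ be a homogeneous polynomial of degree $r$ in the variables $x_1,\dots,x_N$ over $\mathbb{C}$ that vanishes with multiplicity at least $r-1$ at every standard basis vector of $\mathbb{C}^N$. Then for every subset $S \subseteq \{1,\dots,N\}$ of cardinality $r$, the polynomial obtained from $Q$ by substituting $x_j = 0$ for all $j \notin S$ is a scalar multiple of the monomial $\prod_{i \in S} x_i$. -/

import Mathlib

/-- A polynomial `Q ∈ ℂ[x_1, …, x_N]` vanishes with multiplicity at least `y` at a
point `p ∈ ℂ^N` if every iterated partial derivative of `Q` of total order at most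
`y - 1` (equivalently, of total order `< y`) evaluates to `0` at `p`. -/
def VanishesToOrder {σ : Type*} (Q : MvPolynomial σ ℂ) (p : σ → ℂ) (y : ℕ) : Prop :=
  ∀ L : List σ, L.length < y →
    MvPolynomial.eval p (L.foldr (fun i q => MvPolynomial.pderiv i q) Q) = 0

section Aux
open MvPolynomial Finsupp

theorem my_coeff_pderiv {σ : Type*} [DecidableEq σ] (i : σ) (P : MvPolynomial σ ℂ)
    (n : σ →₀ ℕ) :
    coeff n (pderiv i P) = (n i + 1 : ℕ) * coeff (n + Finsupp.single i 1) P := by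
  induction P using MvPolynomial.induction_on' with
  | monomial m a =>
    rw [pderiv_monomial, coeff_monomial, coeff_monomial]
    by_cases h2 : m = n + Finsupp.single i 1
    · subst h2
      rw [if_pos (add_tsub_cancel_right _ _), if_pos rfl]
      have : ((n + Finsupp.single i 1 : σ →₀ ℕ)) i = n i + 1 := by simp
      rw [this]; push_cast; ring
    · rw [if_neg h2, mul_zero]
      by_cases h1 : m - Finsupp.single i 1 = n
      · rw [if_pos h1]
        have hmi : m i = 0 := by
          by_contra hmi
          apply h2
          ext j
          by_cases hj : j = i
          · subst hj
            have : ((m - Finsupp.single j 1 : σ →₀ ℕ)) j = m j - 1 := by simp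
            have hn : n j = m j - 1 := by rw [← h1, this]
            simp [hn, Nat.sub_add_cancel (Nat.one_le_iff_ne_zero.mpr hmi)]
          · have : ((m - Finsupp.single i 1 : σ →₀ ℕ)) j = m j := by simp [Finsupp.single_apply, Ne.symm hj]
            have hn : n j = m j := by rw [← h1, this]
            simp [hn, Finsupp.single_apply, Ne.symm hj]
        simp [hmi]
      · rw [if_neg h1]
  | add p q hp hq => simp [hp, hq, coeff_add, mul_add]

noncomputable def listCount {σ : Type*} [DecidableEq σ] (L : List σ) : σ →₀ ℕ :=
  L.foldr (fun i f => Finsupp.single i 1 + f) 0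

theorem listCount_apply {σ : Type*} [DecidableEq σ] (L : List σ) (a : σ) :
    listCount L a = L.count a := by
  induction L with
  | nil => simp [listCount]
  | cons i L ih =>
    show ((Finsupp.single i 1 + listCount L : σ →₀ ℕ)) a = _
    rw [Finsupp.add_apply, ih, Finsupp.single_apply, List.count_cons]
    by_cases h : a = i
    · subst h; simp [add_comm]
    · rw [if_neg (Ne.symm h), if_neg (by simpa using Ne.symm h)]; ring

theorem my_coeff_foldr {σ : Type*} [DecidableEq σ] (L : List σ) (P : MvPolynomial σ ℂ)
    (n : σ →₀ ℕ) :
    ∃ c : ℕ, 0 < c ∧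
      coeff n (L.foldr (fun i q => pderiv i q) P) = c * coeff (n + listCount L) P := by
  induction L generalizing n with
  | nil => exact ⟨1, one_pos, by simp [listCount]⟩
  | cons i L ih =>
    obtain ⟨c, hc, hc2⟩ := ih (n + Finsupp.single i 1)
    refine ⟨(n i + 1) * c, by positivity, ?_⟩
    rw [List.foldr_cons, my_coeff_pderiv, hc2]
    have : n + Finsupp.single i 1 + listCount L = n + listCount (i :: L) := by
      show _ = n + (Finsupp.single i 1 + listCount L)
      rw [add_assoc]
    rw [this]; push_cast; ring

/-- A polynomial `Q ∈ ℂ[x_1, …, x_N]` vanishes with multiplicity at least `y` at a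
point `p ∈ ℂ^N` if every iterated partial derivative of `Q` of total order at most
`y - 1` (equivalently, of total order `< y`) evaluates to `0` at `p`. -/
theorem degree_add' {σ : Type*} (f g : σ →₀ ℕ) :
    (f + g).degree = f.degree + g.degree := by
  classical
  show (f + g).sum (fun _ n => n) = f.sum (fun _ n => n) + g.sum (fun _ n => n)
  exact Finsupp.sum_add_index' (fun _ => rfl) (fun _ _ _ => rfl)

theorem degree_single' {σ : Type*} (a : σ) (b : ℕ) :
    (Finsupp.single a b).degree = b := by
  classical
  by_cases hb : b = 0
  · subst hb; simp [Finsupp.degree]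
  · rw [Finsupp.degree_apply, Finsupp.support_single_ne_zero _ hb, Finset.sum_singleton,
      Finsupp.single_eq_same]

theorem key_vanish {N r : ℕ} (Q : MvPolynomial (Fin N) ℂ) (hQ : Q.IsHomogeneous r)
    (hv : ∀ j : Fin N, VanishesToOrder Q (Pi.single j 1) (r - 1))
    (m : Fin N →₀ ℕ) (j : Fin N) (hj : 2 ≤ m j) : coeff m Q = 0 := by
  classical
  by_contra hne
  have hdeg : m.degree = r := by
    by_contra h
    exact hne (hQ.coeff_eq_zero h)
  set k : Fin N →₀ ℕ := m.erase j with hk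
  set L : List (Fin N) := k.toMultiset.toList with hL
  have hcount : ∀ a, L.count a = k a := by
    intro a
    rw [← Multiset.coe_count, Multiset.coe_toList, Finsupp.count_toMultiset]
  have hLcount : listCount L = k := by
    ext a; rw [listCount_apply, hcount]
  have hsplit : Finsupp.single j (m j) + k = m := Finsupp.single_add_erase j m
  have hdegsplit : m j + k.degree = r := by
    have h1 : (Finsupp.single j (m j) + k).degree = m j + k.degree := by
      rw [degree_add', degree_single']
    rw [hsplit] at h1
    omega
  have hlen : L.length = k.degree := by
    rw [hL, Multiset.length_toList, Finsupp.card_toMultiset]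
    rfl
  have hlenlt : L.length < r - 1 := by
    rw [hlen]; omega
  have h0 := hv j L hlenlt
  set P : MvPolynomial (Fin N) ℂ := L.foldr (fun i q => MvPolynomial.pderiv i q) Q with hP
  set n0 : Fin N →₀ ℕ := Finsupp.single j (m j) with hn0
  -- eval computation
  rw [MvPolynomial.eval_eq] at h0
  have hterm : ∀ n ∈ P.support, n ≠ n0 →
      coeff n P * ∏ i ∈ n.support, (Pi.single j 1 : Fin N → ℂ) i ^ n i = 0 := by
    intro n hn hnn0
    by_cases hsupp : ∀ i ∈ n.support, i = j
    · -- n = single j (n j); show coeff n P = 0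
      have hnform : n = Finsupp.single j (n j) := by
        ext i
        by_cases hij : i = j
        · subst hij; simp
        · rw [Finsupp.single_apply, if_neg (fun h => hij h.symm)]
          by_contra hni
          exact hij (hsupp i (Finsupp.mem_support_iff.mpr hni))
      obtain ⟨c, hc, hc2⟩ := my_coeff_foldr L Q n
      have hcoeffQ : coeff (n + listCount L) Q = 0 := by
        apply hQ.coeff_eq_zero
        rw [hLcount, degree_add']
        intro habs
        apply hnn0
        have hndeg : n.degree = n j := by
          rw [hnform, degree_single', Finsupp.single_eq_same]
        have : n j = m j := by omega
        rw [hnform, this]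
      have hc2' : coeff n P = (c : ℂ) * coeff (n + listCount L) Q := hc2
      rw [hc2', hcoeffQ, mul_zero, zero_mul]
    · push_neg at hsupp
      obtain ⟨i, hi, hij⟩ := hsupp
      have : (Pi.single j 1 : Fin N → ℂ) i ^ n i = 0 := by
        rw [Pi.single_apply, if_neg hij]
        exact zero_pow (Finsupp.mem_support_iff.mp hi)
      rw [Finset.prod_eq_zero hi this, mul_zero]
  rw [Finset.sum_eq_single n0 hterm (fun h => by
    rw [MvPolynomial.notMem_support_iff.mp h, zero_mul])] at h0
  -- now the n0 term
  have hn0supp : n0.support = {j} := Finsupp.support_single_ne_zero j (by omega)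
  have hprod : (∏ i ∈ n0.support, (Pi.single j 1 : Fin N → ℂ) i ^ n0 i) = 1 := by
    rw [hn0supp, Finset.prod_singleton, Pi.single_eq_same, one_pow]
  rw [hprod, mul_one] at h0
  obtain ⟨c, hc, hc2⟩ := my_coeff_foldr L Q n0
  have hc2' : coeff n0 P = (c : ℂ) * coeff (n0 + listCount L) Q := hc2
  rw [hc2', hLcount, hsplit] at h0
  rcases mul_eq_zero.mp h0 with h | h
  · exact absurd h (by exact_mod_cast hc.ne')
  · exact hne h

end Aux

open MvPolynomial Finsupp in
/-- Let `r ≤ N` and let `Q` be a homogeneous polynomial of degree `r` in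
`x_1, …, x_N` over `ℂ` vanishing with multiplicity at least `r - 1` at every
standard basis vector.  Then for every subset `S ⊆ {1, …, N}` of cardinality `r`,
the polynomial obtained from `Q` by substituting `x_j = 0` for all `j ∉ S` is a
scalar multiple of the monomial `∏_{i ∈ S} x_i`. -/
theorem stmt7 (N r : ℕ) (hr : r ≤ N) (Q : MvPolynomial (Fin N) ℂ)
    (hQ : Q.IsHomogeneous r)
    (hv : ∀ j : Fin N, VanishesToOrder Q (Pi.single j 1) (r - 1))
    (S : Finset (Fin N)) (hS : S.card = r) :
    ∃ c : ℂ,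
      MvPolynomial.aeval (fun j => if j ∈ S then MvPolynomial.X j else 0) Q =
        MvPolynomial.C c * ∏ i ∈ S, MvPolynomial.X i := by
  classical
  set f : Fin N → MvPolynomial (Fin N) ℂ := fun j => if j ∈ S then MvPolynomial.X j else 0
    with hf
  set s0 : Fin N →₀ ℕ := ∑ i ∈ S, Finsupp.single i 1 with hs0
  have hs0apply : ∀ a, s0 a = if a ∈ S then 1 else 0 := by
    intro a
    rw [hs0, Finsupp.finset_sum_apply]
    simp [Finsupp.single_apply]
  have hs0supp : s0.support = S := by
    ext a
    rw [Finsupp.mem_support_iff, hs0apply]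
    by_cases h : a ∈ S <;> simp [h]
  refine ⟨coeff s0 Q, ?_⟩
  conv_lhs => rw [Q.as_sum]
  rw [map_sum]
  rw [Finset.sum_eq_single s0 ?_ ?_]
  · rw [aeval_monomial]
    have : s0.prod (fun i k => f i ^ k) = ∏ i ∈ S, MvPolynomial.X i := by
      rw [Finsupp.prod, hs0supp]
      apply Finset.prod_congr rfl
      intro i hi
      rw [hs0apply, if_pos hi, pow_one]; show (if i ∈ S then MvPolynomial.X i else 0) = _; rw [if_pos hi]
    rw [this, algebraMap_eq]
  · intro m hm hmne
    rw [aeval_monomial]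
    by_cases hsub : ∀ i, i ∉ S → m i = 0
    · -- support ⊆ S; show some exponent ≥ 2, contradiction
      exfalso
      have hmsupp : m.support ⊆ S := by
        intro i hi
        by_contra h
        exact Finsupp.mem_support_iff.mp hi (hsub i h)
      have hmdeg : m.degree = r := by
        by_contra h
        exact MvPolynomial.mem_support_iff.mp hm (hQ.coeff_eq_zero h)
      by_cases hone : ∀ i, m i ≤ 1
      · apply hmne
        have hdegcard : m.degree = m.support.card := by
          rw [Finsupp.degree_apply]
          rw [Finset.card_eq_sum_ones]
          apply Finset.sum_congr rfl
          intro i hi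
          have := Finsupp.mem_support_iff.mp hi
          have := hone i
          omega
        have hsuppeq : m.support = S := by
          apply Finset.eq_of_subset_of_card_le hmsupp
          rw [← hdegcard, hmdeg, hS]
        ext a
        rw [hs0apply]
        by_cases ha : a ∈ S
        · rw [if_pos ha]
          have : a ∈ m.support := hsuppeq ▸ ha
          have := Finsupp.mem_support_iff.mp this
          have := hone a
          omega
        · rw [if_neg ha]
          by_contra h
          exact ha (hsuppeq ▸ Finsupp.mem_support_iff.mpr h)
      · push_neg at hone
        obtain ⟨i, hi⟩ := hone
        exact MvPolynomial.mem_support_iff.mp hm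
          (key_vanish Q hQ hv m i (by omega))
    · push_neg at hsub
      obtain ⟨i, hiS, hi⟩ := hsub
      have hiprod : f i ^ m i = 0 := by
        rw [hf]
        show (if i ∈ S then MvPolynomial.X i else 0) ^ m i = 0
        rw [if_neg hiS]
        exact zero_pow hi
      rw [Finsupp.prod, Finset.prod_eq_zero (Finsupp.mem_support_iff.mpr hi) hiprod,
        mul_zero]
  · intro h
    rw [MvPolynomial.notMem_support_iff.mp h]
    simp
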